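/- An idempotent monoid acts invertibly on its modules: in a monoidal category, if E is a monoid whose multiplication E ⊗ E ⟶ E is an isomorphism and M is an E-module, then M is isomorphic to E ⊗ M via the unit map η ⊗ 1 : M ≅ 𝟙 ⊗ M ⟶ E ⊗ M, with inverse the action map. -/

import Mathlib

open CategoryTheory MonoidalCategory

/-- An idempotent monoid acts invertibly on its modules: if the multiplication of `E`
is an isomorphism, then for any `E`-module `M` the map
`M ≅ 𝟙 ⊗ M ⟶ E ⊗ M` given by the unit is inverse to the action map. -/
theorem module_iso_of_idempotent_monoid
    {C : Type*} [Category C] [MonoidalCategory C] (E : Mon C) [IsIso (MonObj.mul (X := E.X))]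
    (M : Mod C E.X) :
    (λ_ M.X).inv ≫ (MonObj.one (X := E.X) ▷ M.X) ≫ (ModObj.smul (M := E.X) (X := M.X) : E.X ⊗ M.X ⟶ M.X) = 𝟙 M.X ∧
      (ModObj.smul (M := E.X) (X := M.X) : E.X ⊗ M.X ⟶ M.X) ≫ (λ_ M.X).inv ≫ (MonObj.one (X := E.X) ▷ M.X) = 𝟙 (E.X ⊗ M.X) := by
  have hv : ((λ_ M.X).inv ≫ MonObj.one (X := E.X) ▷ M.X) ≫ (ModObj.smul (M := E.X) (X := M.X) : E.X ⊗ M.X ⟶ M.X) = 𝟙 M.X := by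
    rw [Category.assoc, ModObj.one_smul_self E.X M.X, Iso.inv_hom_id]
  have hone : IsIso (MonObj.one (X := E.X) ▷ E.X) := by
    have h : MonObj.one (X := E.X) ▷ E.X = (λ_ E.X).hom ≫ inv (MonObj.mul (X := E.X)) := by
      rw [← MonObj.one_mul E.X]; simp
    rw [h]; infer_instance
  have hone2 : IsIso (MonObj.one (X := E.X) ▷ (E.X ⊗ M.X)) := by
    rw [show MonObj.one (X := E.X) ▷ (E.X ⊗ M.X)
        = (α_ _ _ _).inv ≫ ((MonObj.one (X := E.X) ▷ E.X) ▷ M.X) ≫ (α_ _ _ _).hom by simp]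
    infer_instance
  have honeX : IsIso (MonObj.one (X := E.X) ▷ M.X) := by
    refine ⟨(E.X ◁ ((λ_ M.X).inv ≫ MonObj.one (X := E.X) ▷ M.X)) ≫ inv (MonObj.one (X := E.X) ▷ (E.X ⊗ M.X)) ≫
      ((𝟙_ C) ◁ (ModObj.smul (M := E.X) (X := M.X) : E.X ⊗ M.X ⟶ M.X)), ?_, ?_⟩
    · rw [← Category.assoc, ← whisker_exchange]
      slice_lhs 2 3 => rw [IsIso.hom_inv_id]
      rw [Category.id_comp, ← MonoidalCategory.whiskerLeft_comp, hv,
        MonoidalCategory.whiskerLeft_id]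
    · slice_lhs 3 4 => rw [whisker_exchange]
      slice_lhs 2 3 => rw [IsIso.inv_hom_id]
      rw [Category.id_comp, ← MonoidalCategory.whiskerLeft_comp, hv,
        MonoidalCategory.whiskerLeft_id]
  have hiso : IsIso ((λ_ M.X).inv ≫ MonObj.one (X := E.X) ▷ M.X) := inferInstance
  have hact : (ModObj.smul (M := E.X) (X := M.X) : E.X ⊗ M.X ⟶ M.X) = inv ((λ_ M.X).inv ≫ MonObj.one (X := E.X) ▷ M.X) := (IsIso.inv_eq_of_hom_inv_id hv).symm
  refine ⟨by simp only [Category.assoc] at hv ⊢; exact hv, ?_⟩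
  rw [hact, IsIso.inv_hom_id]
  rfl
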